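/- arXiv:1902.09429 — 4 statements merged into one kernel-verified Lean document; each statement's English description precedes it below -/
import Mathlib

section
/- Let P be an affine plane in ℝ³, let T ∈ ℝ³ with T ∉ P, and let u₁, u₂ ∈ P with u₁ ≠ u₂. For i = 1, 2 let gᵢ : ℝ → ℝ be strictly decreasing on [0, π], and for A ∈ P define the objective G(A) = g₁(∠(u₁ − T, A − T)) + g₂(∠(u₂ − T, A − T)). Then every point A* ∈ P that maximizes G over P lies on the closed segment joining u₁ and u₂ (Proposition 1: with two users, the optimal steering angle points to a location on the line segment between the two user locations). -/
open InnerProductGeometry RealInnerProductSpace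

variable {V : Type*} [NormedAddCommGroup V] [InnerProductSpace ℝ V]

private lemma aux_angle_lt' {x y z : V}
    (h : ⟪x, z⟫ / (‖x‖ * ‖z‖) < ⟪x, y⟫ / (‖x‖ * ‖y‖)) :
    angle x y < angle x z := by
  have h1 := abs_le.1 (abs_real_inner_div_norm_mul_norm_le_one x y)
  have h2 := abs_le.1 (abs_real_inner_div_norm_mul_norm_le_one x z)
  exact Real.strictAntiOn_arccos ⟨h2.1, h2.2⟩ ⟨h1.1, h1.2⟩ h

private lemma aux_core' {c β r s m ε : ℝ} (hr : 0 < r) (hs : 0 < s) (hβ : 0 < β) (hε : 0 < ε)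
    (hm : m ^ 2 = r ^ 2 + ε ^ 2 * s ^ 2) (hmp : 0 < m)
    (hbound : ε * ((|c| + 1) * s ^ 2) ≤ r ^ 2 * β) :
    c * m < (c + ε * β) * r := by
  have hrm : r ≤ m := by nlinarith
  have habs : 0 ≤ |c| := abs_nonneg c
  have h2 : (m - r) * (m + r) = ε ^ 2 * s ^ 2 := by linear_combination hm
  have h4 : |c| * ((m - r) * (2 * r)) ≤ |c| * ((m - r) * (m + r)) :=
    mul_le_mul_of_nonneg_left (by nlinarith) habs
  have h5 : ε * (|c| * s ^ 2) ≤ r ^ 2 * β - ε * s ^ 2 := by nlinarith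
  have h6 : ε * (ε * (|c| * s ^ 2)) ≤ ε * (r ^ 2 * β - ε * s ^ 2) :=
    mul_le_mul_of_nonneg_left h5 (le_of_lt hε)
  have h7 : |c| * ((m - r) * (2 * r)) < 2 * (ε * β * r) * r := by
    nlinarith [mul_pos (mul_pos hε hβ) (mul_pos hr hr),
      mul_pos hε (mul_pos hε (mul_pos hs hs))]
  have key : |c| * (m - r) < ε * β * r := by nlinarith
  have hcm : c * (m - r) ≤ |c| * (m - r) :=
    mul_le_mul_of_nonneg_right (le_abs_self c) (by linarith)
  nlinarith

set_option maxHeartbeats 1600000 in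
private lemma aux_perturb {v₁ v₂ a n : V}
    (hv₁ : v₁ ≠ 0) (hv₂ : v₂ ≠ 0) (ha : a ≠ 0) (hna : ⟪n, a⟫ ≠ 0)
    (hind : ∀ α γ : ℝ, α • v₁ + γ • v₂ = 0 → α = 0 ∧ γ = 0)
    (hnot : a ∉ Submodule.span ℝ ({v₁, v₂} : Set V)) :
    ∃ (t : ℝ) (x : V), 0 < t ∧ ⟪n, t • x - a⟫ = 0 ∧
      angle v₁ x < angle v₁ a ∧ angle v₂ x < angle v₂ a := by
  have hr : 0 < ‖a‖ := norm_pos_iff.2 ha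
  have hproj_ne : ∀ u : V, u ∈ ({v₁, v₂} : Set V) → u ≠ 0 →
      u - (⟪u, a⟫ / ‖a‖ ^ 2) • a ≠ 0 := by
    intro u hmem hu heq
    rw [sub_eq_zero] at heq
    by_cases hc : ⟪u, a⟫ / ‖a‖ ^ 2 = 0
    · rw [hc, zero_smul] at heq; exact hu heq
    · apply hnot
      have h2 := congrArg (fun z : V => (⟪u, a⟫ / ‖a‖ ^ 2)⁻¹ • z) heq
      rw [smul_smul, inv_mul_cancel₀ hc, one_smul] at h2
      rw [← h2]
      exact Submodule.smul_mem _ _ (Submodule.subset_span hmem)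
  set P₁ : V := v₁ - (⟪v₁, a⟫ / ‖a‖ ^ 2) • a with hP₁
  set P₂ : V := v₂ - (⟪v₂, a⟫ / ‖a‖ ^ 2) • a with hP₂
  have hP₁0 : P₁ ≠ 0 := hproj_ne v₁ (by simp) hv₁
  have hP₂0 : P₂ ≠ 0 := hproj_ne v₂ (by simp) hv₂
  have hP₁a : ⟪P₁, a⟫ = 0 := by
    rw [hP₁, inner_sub_left, real_inner_smul_left, real_inner_self_eq_norm_sq]
    field_simp
    ring
  have hP₂a : ⟪P₂, a⟫ = 0 := by
    rw [hP₂, inner_sub_left, real_inner_smul_left, real_inner_self_eq_norm_sq]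
    field_simp
    ring
  have hnP₁ : 0 < ‖P₁‖ := norm_pos_iff.2 hP₁0
  have hnP₂ : 0 < ‖P₂‖ := norm_pos_iff.2 hP₂0
  set d : V := ‖P₂‖ • P₁ + ‖P₁‖ • P₂ with hd
  have hd_a : ⟪d, a⟫ = 0 := by
    rw [hd, inner_add_left, real_inner_smul_left, real_inner_smul_left, hP₁a, hP₂a]
    ring
  have ha_d : ⟪a, d⟫ = 0 := by rw [real_inner_comm]; exact hd_a
  have hd0 : d ≠ 0 := by
    intro h
    have h' : ‖P₂‖ • P₁ + ‖P₁‖ • P₂ = 0 := by rw [← hd]; exact h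
    rw [hP₁, hP₂] at h'
    have hexp : ‖P₂‖ • v₁ + ‖P₁‖ • v₂
        = ((‖P₂‖ * ⟪v₁, a⟫ + ‖P₁‖ * ⟪v₂, a⟫) / ‖a‖ ^ 2) • a := by
      linear_combination (norm := module) h'
    by_cases hμ : (‖P₂‖ * ⟪v₁, a⟫ + ‖P₁‖ * ⟪v₂, a⟫) / ‖a‖ ^ 2 = 0
    · rw [hμ, zero_smul] at hexp
      exact hnP₂.ne' (hind _ _ hexp).1
    · apply hnot
      have : a = ((‖P₂‖ * ⟪v₁, a⟫ + ‖P₁‖ * ⟪v₂, a⟫) / ‖a‖ ^ 2)⁻¹ •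
          (‖P₂‖ • v₁ + ‖P₁‖ • v₂) := by
        rw [hexp, smul_smul, inv_mul_cancel₀ hμ, one_smul]
      rw [this]
      refine Submodule.smul_mem _ _ (Submodule.add_mem _ ?_ ?_)
      · exact Submodule.smul_mem _ _ (Submodule.subset_span (by simp))
      · exact Submodule.smul_mem _ _ (Submodule.subset_span (by simp))
  have hs : 0 < ‖d‖ := norm_pos_iff.2 hd0
  have hkey : 0 < ‖P₁‖ * ‖P₂‖ + ⟪P₁, P₂⟫ := by
    have hs2 : ‖d‖ ^ 2 = 2 * (‖P₁‖ * ‖P₂‖) * (‖P₁‖ * ‖P₂‖ + ⟪P₁, P₂⟫) := by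
      rw [hd, norm_add_sq_real, norm_smul, norm_smul, real_inner_smul_left,
        real_inner_smul_right, Real.norm_eq_abs, Real.norm_eq_abs,
        abs_of_nonneg (norm_nonneg _), abs_of_nonneg (norm_nonneg _)]
      ring
    nlinarith [mul_pos hnP₁ hnP₂, sq_nonneg ‖d‖]
  have hv₁split : v₁ = P₁ + (⟪v₁, a⟫ / ‖a‖ ^ 2) • a := by rw [hP₁]; abel
  have hv₂split : v₂ = P₂ + (⟪v₂, a⟫ / ‖a‖ ^ 2) • a := by rw [hP₂]; abel
  have hβ₁ : ⟪v₁, d⟫ = ‖P₁‖ * (‖P₁‖ * ‖P₂‖ + ⟪P₁, P₂⟫) := by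
    conv_lhs => rw [hv₁split]
    rw [inner_add_left, real_inner_smul_left, ha_d, hd, inner_add_right,
      real_inner_smul_right, real_inner_smul_right, real_inner_self_eq_norm_sq]
    ring
  have hβ₂ : ⟪v₂, d⟫ = ‖P₂‖ * (‖P₁‖ * ‖P₂‖ + ⟪P₁, P₂⟫) := by
    conv_lhs => rw [hv₂split]
    rw [inner_add_left, real_inner_smul_left, ha_d, hd, inner_add_right,
      real_inner_smul_right, real_inner_smul_right, real_inner_self_eq_norm_sq,
      real_inner_comm P₂ P₁]
    ring
  have hβ₁pos : 0 < ⟪v₁, d⟫ := by rw [hβ₁]; exact mul_pos hnP₁ hkey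
  have hβ₂pos : 0 < ⟪v₂, d⟫ := by rw [hβ₂]; exact mul_pos hnP₂ hkey
  -- choose ε
  set e₁ : ℝ := ‖a‖ ^ 2 * ⟪v₁, d⟫ / ((|⟪v₁, a⟫| + 1) * ‖d‖ ^ 2) with he₁
  set e₂ : ℝ := ‖a‖ ^ 2 * ⟪v₂, d⟫ / ((|⟪v₂, a⟫| + 1) * ‖d‖ ^ 2) with he₂
  set e₃ : ℝ := |⟪n, a⟫| / (|⟪n, d⟫| + 1) with he₃
  have he₁pos : 0 < e₁ := by
    apply div_pos (by positivity)
    positivity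
  have he₂pos : 0 < e₂ := by
    apply div_pos (by positivity)
    positivity
  have he₃pos : 0 < e₃ := by
    apply div_pos (abs_pos.2 hna)
    positivity
  set ε : ℝ := min (min e₁ e₂) e₃ with hε
  have hεpos : 0 < ε := lt_min (lt_min he₁pos he₂pos) he₃pos
  set x : V := a + ε • d with hx
  have hax : ⟪a, ε • d⟫ = 0 := by rw [real_inner_smul_right, ha_d]; ring
  have hmx2 : ‖x‖ ^ 2 = ‖a‖ ^ 2 + ε ^ 2 * ‖d‖ ^ 2 := by
    rw [hx, norm_add_sq_real, hax, norm_smul, Real.norm_eq_abs, mul_pow, sq_abs]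
    ring
  have hmx : 0 < ‖x‖ := by
    rw [show (0:ℝ) < ‖x‖ ↔ ‖x‖ ≠ 0 from ⟨ne_of_gt, fun h => lt_of_le_of_ne (norm_nonneg x) (Ne.symm h)⟩]
    intro h
    have : ‖x‖ ^ 2 = 0 := by rw [h]; ring
    nlinarith [sq_nonneg ε, sq_nonneg ‖d‖, mul_pos hr hr]
  -- inner with n
  have hnx : ⟪n, x⟫ = ⟪n, a⟫ + ε * ⟪n, d⟫ := by
    rw [hx, inner_add_right, real_inner_smul_right]
  have hε₃ : ε * (|⟪n, d⟫| + 1) ≤ |⟪n, a⟫| := by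
    have h1 : ε ≤ e₃ := min_le_right _ _
    rw [he₃] at h1
    exact (le_div_iff₀ (by positivity)).1 h1
  have hlt : ε * |⟪n, d⟫| < |⟪n, a⟫| := by nlinarith
  have hnx0 : ⟪n, x⟫ ≠ 0 := by
    rw [hnx]
    rcases hna.lt_or_gt with hneg | hpos
    · have : ε * ⟪n, d⟫ < -⟪n, a⟫ := by
        calc ε * ⟪n, d⟫ ≤ ε * |⟪n, d⟫| :=
              mul_le_mul_of_nonneg_left (le_abs_self _) hεpos.le
          _ < |⟪n, a⟫| := hlt
          _ = -⟪n, a⟫ := abs_of_neg hneg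
      exact ne_of_lt (by linarith)
    · have : -(ε * ⟪n, d⟫) < ⟪n, a⟫ := by
        calc -(ε * ⟪n, d⟫) = ε * (-⟪n, d⟫) := by ring
          _ ≤ ε * |⟪n, d⟫| := mul_le_mul_of_nonneg_left (neg_le_abs _) hεpos.le
          _ < |⟪n, a⟫| := hlt
          _ = ⟪n, a⟫ := abs_of_pos hpos
      exact ne_of_gt (by linarith)
  have ht : 0 < ⟪n, a⟫ / ⟪n, x⟫ := by
    rcases hna.lt_or_gt with hneg | hpos
    · apply div_pos_of_neg_of_neg hneg
      rw [hnx]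
      have : ε * ⟪n, d⟫ ≤ ε * |⟪n, d⟫| :=
        mul_le_mul_of_nonneg_left (le_abs_self _) hεpos.le
      have habs : |⟪n, a⟫| = -⟪n, a⟫ := abs_of_neg hneg
      linarith
    · apply div_pos hpos
      rw [hnx]
      have : -(ε * ⟪n, d⟫) ≤ ε * |⟪n, d⟫| := by
        calc -(ε * ⟪n, d⟫) = ε * (-⟪n, d⟫) := by ring
          _ ≤ ε * |⟪n, d⟫| := mul_le_mul_of_nonneg_left (neg_le_abs _) hεpos.le
      have habs : |⟪n, a⟫| = ⟪n, a⟫ := abs_of_pos hpos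
      linarith
  refine ⟨⟪n, a⟫ / ⟪n, x⟫, x, ht, ?_, ?_, ?_⟩
  · rw [inner_sub_right, real_inner_smul_right, div_mul_cancel₀ _ hnx0, sub_self]
  · apply aux_angle_lt'
    have hvx : ⟪v₁, x⟫ = ⟪v₁, a⟫ + ε * ⟪v₁, d⟫ := by
      rw [hx, inner_add_right, real_inner_smul_right]
    have hbound : ε * ((|⟪v₁, a⟫| + 1) * ‖d‖ ^ 2) ≤ ‖a‖ ^ 2 * ⟪v₁, d⟫ := by
      have h1 : ε ≤ e₁ := le_trans (min_le_left _ _) (min_le_left _ _)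
      rw [he₁] at h1
      exact (le_div_iff₀ (by positivity)).1 h1
    have core := aux_core' (c := ⟪v₁, a⟫) hr hs hβ₁pos hεpos hmx2 hmx hbound
    have hq := norm_pos_iff.2 hv₁
    rw [hvx, div_lt_div_iff₀ (by positivity) (by positivity)]
    nlinarith [mul_pos (sub_pos.2 core) hq]
  · apply aux_angle_lt'
    have hvx : ⟪v₂, x⟫ = ⟪v₂, a⟫ + ε * ⟪v₂, d⟫ := by
      rw [hx, inner_add_right, real_inner_smul_right]
    have hbound : ε * ((|⟪v₂, a⟫| + 1) * ‖d‖ ^ 2) ≤ ‖a‖ ^ 2 * ⟪v₂, d⟫ := by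
      have h1 : ε ≤ e₂ := le_trans (min_le_left _ _) (min_le_right _ _)
      rw [he₂] at h1
      exact (le_div_iff₀ (by positivity)).1 h1
    have core := aux_core' (c := ⟪v₂, a⟫) hr hs hβ₂pos hεpos hmx2 hmx hbound
    have hq := norm_pos_iff.2 hv₂
    rw [hvx, div_lt_div_iff₀ (by positivity) (by positivity)]
    nlinarith [mul_pos (sub_pos.2 core) hq]

private lemma aux_outside_real {p q m c X k : ℝ} (hp : 0 < p) (hq : 0 < q) (hm : 0 < m)
    (hk : k < 0) (hX : X = (1 - k) * c + k * q ^ 2)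
    (hm2 : m ^ 2 = (1 - k) ^ 2 * p ^ 2 + 2 * (k * (1 - k)) * c + k ^ 2 * q ^ 2)
    (hCS : c ^ 2 < p ^ 2 * q ^ 2) :
    X * p < c * m := by
  have hE : c ^ 2 * m ^ 2 - X ^ 2 * p ^ 2
      = (c ^ 2 - p ^ 2 * q ^ 2) * k * (2 * (1 - k) * c + k * q ^ 2) := by
    rw [hm2, hX]; ring
  rcases le_or_gt c 0 with hc | hc
  · have hq2c : (0:ℝ) < q ^ 2 - c := by nlinarith
    have hXc : X < c := by nlinarith [mul_neg_of_neg_of_pos hk hq2c]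
    have hthird : 2 * (1 - k) * c + k * q ^ 2 < 0 := by nlinarith
    have hE2 : X ^ 2 * p ^ 2 > c ^ 2 * m ^ 2 := by
      nlinarith [mul_pos (mul_pos (show (0:ℝ) < p ^ 2 * q ^ 2 - c ^ 2 by linarith)
        (show (0:ℝ) < -k by linarith)) (show (0:ℝ) < -(2 * (1 - k) * c + k * q ^ 2) by linarith)]
    have hXp0 : X * p < 0 := mul_neg_of_neg_of_pos (by linarith) hp
    have hcm0 : c * m ≤ 0 := mul_nonpos_iff.2 (Or.inr ⟨hc, hm.le⟩)
    nlinarith [hE2, hXp0, hcm0, sq_nonneg (X * p - c * m), sq_nonneg (X * p + c * m)]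
  · rcases le_or_gt X 0 with hX0 | hX0
    · nlinarith [mul_pos hc hm, mul_nonneg (neg_nonneg.2 hX0) hp.le]
    · have hthird : (0:ℝ) < 2 * (1 - k) * c + k * q ^ 2 := by nlinarith
      have hE2 : c ^ 2 * m ^ 2 > X ^ 2 * p ^ 2 := by
        nlinarith [mul_pos (mul_pos (show (0:ℝ) < p ^ 2 * q ^ 2 - c ^ 2 by linarith)
          (show (0:ℝ) < -k by linarith)) hthird]
      nlinarith [hE2, mul_pos hc hm, mul_pos hX0 hp, sq_nonneg (c * m - X * p),
        sq_nonneg (c * m + X * p)]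

private lemma aux_outside {v w : V} (hv : v ≠ 0) (hw : w ≠ 0)
    (hind : ∀ α γ : ℝ, α • w + γ • v = 0 → α = 0 ∧ γ = 0)
    {k : ℝ} (hk : k < 0) :
    angle v w < angle v ((1 - k) • w + k • v) := by
  have ha0 : (1 - k) • w + k • v ≠ 0 := by
    intro h
    have := (hind _ _ h).1
    linarith
  have hp : 0 < ‖w‖ := norm_pos_iff.2 hw
  have hq : 0 < ‖v‖ := norm_pos_iff.2 hv
  have hm : 0 < ‖(1 - k) • w + k • v‖ := norm_pos_iff.2 ha0
  have hX : ⟪v, (1 - k) • w + k • v⟫ = (1 - k) * ⟪v, w⟫ + k * ‖v‖ ^ 2 := by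
    rw [inner_add_right, real_inner_smul_right, real_inner_smul_right,
      real_inner_self_eq_norm_sq]
  have hm2 : ‖(1 - k) • w + k • v‖ ^ 2
      = (1 - k) ^ 2 * ‖w‖ ^ 2 + 2 * (k * (1 - k)) * ⟪v, w⟫ + k ^ 2 * ‖v‖ ^ 2 := by
    rw [norm_add_sq_real, norm_smul, norm_smul, real_inner_smul_left,
      real_inner_smul_right, Real.norm_eq_abs, Real.norm_eq_abs, mul_pow, mul_pow,
      sq_abs, sq_abs, real_inner_comm w v]
    ring
  have hCS : ⟪v, w⟫ ^ 2 < ‖w‖ ^ 2 * ‖v‖ ^ 2 := by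
    rcases lt_or_eq_of_le (abs_real_inner_le_norm v w) with h | h
    · nlinarith [sq_abs (⟪v, w⟫ : ℝ), abs_nonneg (⟪v, w⟫ : ℝ)]
    · exfalso
      rcases (abs_eq (by positivity : (0:ℝ) ≤ ‖v‖ * ‖w‖)).1 h with h' | h'
      · have h2 := inner_eq_norm_mul_iff_real.1 h'
        -- ‖w‖ • v = ‖v‖ • w
        have h0 := (hind ‖v‖ (-‖w‖) (by rw [neg_smul, ← h2, add_neg_cancel])).1
        exact hq.ne' h0
      · have h'' : ⟪v, -w⟫ = ‖v‖ * ‖-w‖ := by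
          rw [inner_neg_right, norm_neg]; linarith
        have h2 := inner_eq_norm_mul_iff_real.1 h''
        rw [norm_neg, smul_neg] at h2
        -- ‖w‖ • v = -(‖v‖ • w)
        have h0 := (hind ‖v‖ ‖w‖ (by rw [h2, add_neg_cancel])).1
        exact hq.ne' h0
  have key : ((1 - k) * ⟪v, w⟫ + k * ‖v‖ ^ 2) * ‖w‖ < ⟪v, w⟫ * ‖(1 - k) • w + k • v‖ :=
    aux_outside_real hp hq hm hk rfl hm2 hCS
  apply aux_angle_lt'
  rw [hX, div_lt_div_iff₀ (by positivity) (by positivity)]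
  nlinarith [mul_pos (sub_pos.2 key) hq]


/-- Proposition 1: let `P` be an affine plane in ℝ³, `T ∉ P` the transmitter location,
and `u₁ ≠ u₂` two user locations in `P`.  For strictly decreasing (on `[0,π]`) rate
functions `g₁, g₂`, the objective is `G(A) = g₁(∠(u₁−T, A−T)) + g₂(∠(u₂−T, A−T))`.
Every maximizer `A ∈ P` of `G` over `P` lies on the closed segment joining `u₁`, `u₂`. -/
theorem stmt_0 (P : AffineSubspace ℝ (EuclideanSpace ℝ (Fin 3)))
    (hP : Module.finrank ℝ P.direction = 2)
    (T u₁ u₂ : EuclideanSpace ℝ (Fin 3))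
    (hT : T ∉ P) (hu₁ : u₁ ∈ P) (hu₂ : u₂ ∈ P) (hne : u₁ ≠ u₂)
    (g₁ g₂ : ℝ → ℝ)
    (hg₁ : StrictAntiOn g₁ (Set.Icc 0 Real.pi))
    (hg₂ : StrictAntiOn g₂ (Set.Icc 0 Real.pi))
    (G : EuclideanSpace ℝ (Fin 3) → ℝ)
    (hG : ∀ A, G A = g₁ (angle (u₁ - T) (A - T)) + g₂ (angle (u₂ - T) (A - T)))
    (A : EuclideanSpace ℝ (Fin 3)) (hA : A ∈ P)
    (hmax : ∀ B ∈ P, G B ≤ G A) :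
    A ∈ segment ℝ u₁ u₂ := by
  classical
  have hIcc : ∀ x y : EuclideanSpace ℝ (Fin 3), angle x y ∈ Set.Icc 0 Real.pi :=
    fun x y => ⟨angle_nonneg x y, angle_le_pi x y⟩
  -- a normal vector to the plane
  have hfr : Module.finrank ℝ
      ((P.direction)ᗮ : Submodule ℝ (EuclideanSpace ℝ (Fin 3))) = 1 := by
    have h := Submodule.finrank_add_finrank_orthogonal (K := P.direction)
    rw [hP, finrank_euclideanSpace_fin] at h
    omega
  obtain ⟨n, hn_mem, hn0⟩ := Submodule.exists_mem_ne_zero_of_ne_bot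
    (p := (P.direction)ᗮ) (by intro h; rw [h] at hfr; simp at hfr)
  have hspan_n : Submodule.span ℝ ({n} : Set (EuclideanSpace ℝ (Fin 3)))
      = (P.direction)ᗮ := by
    apply Submodule.eq_of_le_of_finrank_le
    · exact Submodule.span_le.2 (Set.singleton_subset_iff.2 hn_mem)
    · rw [hfr, finrank_span_singleton hn0]
  have hmem_iff : ∀ x : EuclideanSpace ℝ (Fin 3),
      x ∈ P.direction ↔ ⟪n, x⟫ = 0 := by
    intro x
    constructor
    · intro hx
      rw [real_inner_comm]
      exact (Submodule.mem_orthogonal P.direction n).1 hn_mem x hx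
    · intro hx
      rw [← Submodule.orthogonal_orthogonal P.direction, Submodule.mem_orthogonal]
      intro u hu
      rw [← hspan_n, Submodule.mem_span_singleton] at hu
      obtain ⟨t, rfl⟩ := hu
      rw [real_inner_smul_left, hx, mul_zero]
  have hdir : ∀ p, p ∈ P → ∀ B, (B ∈ P ↔ ⟪n, B - p⟫ = 0) := by
    intro p hp B
    rw [← AffineSubspace.vsub_right_mem_direction_iff_mem hp B, vsub_eq_sub]
    exact hmem_iff _
  have hna : ⟪n, A - T⟫ ≠ 0 := by
    intro h
    apply hT
    apply (hdir A hA T).2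
    rw [show T - A = -(A - T) by abel, inner_neg_right, h, neg_zero]
  have hnv₁ : ⟪n, u₁ - T⟫ ≠ 0 := by
    intro h
    apply hT
    apply (hdir u₁ hu₁ T).2
    rw [show T - u₁ = -(u₁ - T) by abel, inner_neg_right, h, neg_zero]
  have hv2v1 : ⟪n, u₂ - T⟫ = ⟪n, u₁ - T⟫ := by
    have h1 : ⟪n, u₂ - u₁⟫ = 0 := (hdir u₁ hu₁ u₂).1 hu₂
    have h3 : ⟪n, (u₂ - T) - (u₁ - T)⟫ = 0 := by
      rw [show (u₂ - T) - (u₁ - T) = u₂ - u₁ by abel]; exact h1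
    rw [inner_sub_right] at h3
    linarith
  have hAv1 : ⟪n, A - T⟫ = ⟪n, u₁ - T⟫ := by
    have h1 : ⟪n, A - u₁⟫ = 0 := (hdir u₁ hu₁ A).1 hA
    have h3 : ⟪n, (A - T) - (u₁ - T)⟫ = 0 := by
      rw [show (A - T) - (u₁ - T) = A - u₁ by abel]; exact h1
    rw [inner_sub_right] at h3
    linarith
  have hind : ∀ α γ : ℝ, α • (u₁ - T) + γ • (u₂ - T) = 0 → α = 0 ∧ γ = 0 := by
    intro α γ h
    have h1 : α * ⟪n, u₁ - T⟫ + γ * ⟪n, u₂ - T⟫ = 0 := by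
      have h2 : ⟪n, α • (u₁ - T) + γ • (u₂ - T)⟫ = (0 : ℝ) := by
        rw [h, inner_zero_right]
      rw [inner_add_right, real_inner_smul_right, real_inner_smul_right] at h2
      exact h2
    rw [hv2v1] at h1
    have h2 : (α + γ) * ⟪n, u₁ - T⟫ = 0 := by ring_nf; ring_nf at h1; linarith
    have hγ : γ = -α := by
      rcases mul_eq_zero.1 h2 with h' | h'
      · linarith
      · exact absurd h' hnv₁
    rw [hγ] at h
    have h4 : α • ((u₁ - T) - (u₂ - T)) = 0 := by
      rw [smul_sub]
      rw [neg_smul] at h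
      linear_combination (norm := module) h
    rcases smul_eq_zero.1 h4 with h' | h'
    · exact ⟨h', by rw [hγ, h', neg_zero]⟩
    · exfalso
      apply hne
      have : u₁ - u₂ = 0 := by
        rw [show u₁ - u₂ = (u₁ - T) - (u₂ - T) by abel]; exact h'
      rw [← sub_eq_zero]; exact this
  have hv₁0 : u₁ - T ≠ 0 := fun h => hnv₁ (by rw [h, inner_zero_right])
  have hv₂0 : u₂ - T ≠ 0 := fun h => hnv₁ (by rw [← hv2v1, h, inner_zero_right])
  have ha0 : A - T ≠ 0 := fun h => hna (by rw [h, inner_zero_right])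
  -- from maximality: no point of P improves both angles
  have hcontra : ∀ B, B ∈ P →
      angle (u₁ - T) (B - T) ≤ angle (u₁ - T) (A - T) →
      angle (u₂ - T) (B - T) ≤ angle (u₂ - T) (A - T) →
      (angle (u₁ - T) (B - T) < angle (u₁ - T) (A - T) ∨
       angle (u₂ - T) (B - T) < angle (u₂ - T) (A - T)) → False := by
    intro B hB h1 h2 hor
    have hGB := hmax B hB
    rw [hG A, hG B] at hGB
    rcases hor with h | h
    · have e1 := hg₁ (hIcc (u₁ - T) (B - T)) (hIcc (u₁ - T) (A - T)) h
      have e2 := hg₂.antitoneOn (hIcc (u₂ - T) (B - T)) (hIcc (u₂ - T) (A - T)) h2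
      linarith
    · have e1 := hg₁.antitoneOn (hIcc (u₁ - T) (B - T)) (hIcc (u₁ - T) (A - T)) h1
      have e2 := hg₂ (hIcc (u₂ - T) (B - T)) (hIcc (u₂ - T) (A - T)) h
      linarith
  -- Step 1: A lies in the plane through T, u₁, u₂
  have hspan : (A - T) ∈ Submodule.span ℝ
      ({u₁ - T, u₂ - T} : Set (EuclideanSpace ℝ (Fin 3))) := by
    by_contra hnot
    obtain ⟨t, x, ht, hortho, ha1, ha2⟩ := aux_perturb hv₁0 hv₂0 ha0 hna hind hnot
    set B : EuclideanSpace ℝ (Fin 3) := t • x - (A - T) + A with hB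
    have hBP : B ∈ P := by
      apply (hdir A hA B).2
      rw [show B - A = t • x - (A - T) by rw [hB]; abel]
      exact hortho
    have hBT : B - T = t • x := by rw [hB]; abel
    refine hcontra B hBP ?_ ?_ (Or.inl ?_)
    · rw [hBT, angle_smul_right_of_pos _ _ ht]; exact ha1.le
    · rw [hBT, angle_smul_right_of_pos _ _ ht]; exact ha2.le
    · rw [hBT, angle_smul_right_of_pos _ _ ht]; exact ha1
  rw [Submodule.mem_span_pair] at hspan
  obtain ⟨α, γ, hk⟩ := hspan
  have hsum : α + γ = 1 := by
    have h2 : ⟪n, α • (u₁ - T) + γ • (u₂ - T)⟫ = ⟪n, A - T⟫ := by rw [hk]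
    rw [inner_add_right, real_inner_smul_right, real_inner_smul_right] at h2
    rw [hv2v1, hAv1] at h2
    have h3 : (α + γ - 1) * ⟪n, u₁ - T⟫ = 0 := by ring_nf; ring_nf at h2; linarith
    rcases mul_eq_zero.1 h3 with h' | h'
    · linarith
    · exact absurd h' hnv₁
  have hα : α = 1 - γ := by linarith
  rw [hα] at hk
  -- hk : (1 - γ) • (u₁ - T) + γ • (u₂ - T) = A - T
  rcases lt_or_ge γ 0 with hγ | hγ0
  · -- A beyond u₁ : contradiction with B = u₁
    exfalso
    have hang := aux_outside hv₂0 hv₁0 hind hγ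
    rw [hk] at hang
    refine hcontra u₁ hu₁ ?_ hang.le (Or.inr hang)
    rw [show u₁ - T = u₁ - T from rfl, angle_self hv₁0]
    exact angle_nonneg _ _
  · rcases le_or_gt γ 1 with hγ1 | hγ1
    · -- on the segment
      refine ⟨1 - γ, γ, by linarith, hγ0, by ring, ?_⟩
      have : A = (1 - γ) • u₁ + γ • u₂ := by
        linear_combination (norm := module) (-1 : ℝ) • hk
      rw [this]
    · -- A beyond u₂ : contradiction with B = u₂
      exfalso
      have hind' : ∀ α' γ' : ℝ, α' • (u₂ - T) + γ' • (u₁ - T) = 0 → α' = 0 ∧ γ' = 0 := by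
        intro α' γ' h
        have := hind γ' α' (by rw [add_comm]; exact h)
        exact ⟨this.2, this.1⟩
      have hang := aux_outside hv₁0 hv₂0 hind' (show 1 - γ < 0 by linarith)
      have harg : (1 - (1 - γ)) • (u₂ - T) + (1 - γ) • (u₁ - T) = A - T := by
        linear_combination (norm := module) hk
      rw [harg] at hang
      refine hcontra u₂ hu₂ hang.le ?_ (Or.inl hang)
      rw [angle_self hv₂0]
      exact angle_nonneg _ _
end

section
/- Let x and y be linearly independent vectors in a real inner product space, and let w be a nonzero vector that is NOT of the form a·x + b·y with a ≥ 0 and b ≥ 0 (i.e., w does not lie in the convex cone generated by x and y). Then ∠(x, w) + ∠(w, y) > ∠(x, y). (In the beam-steering setting: if the beam orientation does not point to the segment between the two users, then φ₁ + φ₂ > φ₁₋₂, so such a steering is not Pareto efficient.) -/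
open InnerProductGeometry

open scoped RealInnerProductSpace

set_option maxHeartbeats 1000000 in
/-- If `x` and `y` are linearly independent vectors in a real inner product space and `w`
is a nonzero vector that does not lie in the convex cone generated by `x` and `y`
(i.e., `w` is not of the form `a•x + b•y` with `a ≥ 0` and `b ≥ 0`), then
`∠(x,w) + ∠(w,y) > ∠(x,y)`. -/
theorem stmt_3 {V : Type*} [NormedAddCommGroup V] [InnerProductSpace ℝ V]
    (x y w : V) (hxy : LinearIndependent ℝ ![x, y]) (hw : w ≠ 0)
    (hcone : ¬ ∃ a b : ℝ, 0 ≤ a ∧ 0 ≤ b ∧ w = a • x + b • y) :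
    angle x y < angle x w + angle w y := by
  by_contra hcon
  push_neg at hcon
  have hli : ∀ s t : ℝ, s • x + t • y = 0 → s = 0 ∧ t = 0 :=
    LinearIndependent.pair_iff.mp hxy
  have hx : x ≠ 0 := by
    intro hx0
    have := hli 1 0 (by simp [hx0])
    exact one_ne_zero this.1
  have hy : y ≠ 0 := by
    intro hy0
    have := hli 0 1 (by simp [hy0])
    exact one_ne_zero this.2
  have hnx : (0:ℝ) < ‖x‖ := norm_pos_iff.mpr hx
  have hny : (0:ℝ) < ‖y‖ := norm_pos_iff.mpr hy
  have hnw : (0:ℝ) < ‖w‖ := norm_pos_iff.mpr hw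
  set α := angle x w with hα
  set β := angle w y with hβ
  set γ := angle x y with hγ
  have hαnn : (0:ℝ) ≤ α := angle_nonneg x w
  have hβnn : (0:ℝ) ≤ β := angle_nonneg w y
  have hαpi : α ≤ Real.pi := angle_le_pi x w
  have hβpi : β ≤ Real.pi := angle_le_pi w y
  have hγpi : γ < Real.pi := by
    rcases lt_or_eq_of_le (angle_le_pi x y) with h | h
    · exact h
    · exfalso
      rcases angle_eq_pi_iff.mp h with ⟨-, r, hr, hyx⟩
      have := hli r (-1) (by rw [hyx]; simp)
      norm_num at this
  set A := ⟪x, w⟫ with hA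
  set B := ⟪y, w⟫ with hB
  have hAeq : A = Real.cos α * (‖x‖ * ‖w‖) := (cos_angle_mul_norm_mul_norm x w).symm
  have hBeq : B = Real.cos β * (‖w‖ * ‖y‖) := by
    rw [hB, ← real_inner_comm y w]
    exact (cos_angle_mul_norm_mul_norm w y).symm
  set a := A / ‖w‖^2 with ha
  set b := B / ‖w‖^2 with hb
  set x' := x - a • w with hx'
  set y' := y - b • w with hy'
  have hww : ⟪w, w⟫ = ‖w‖^2 := real_inner_self_eq_norm_sq w
  have hxx : ⟪x, x⟫ = ‖x‖^2 := real_inner_self_eq_norm_sq x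
  have hyy : ⟪y, y⟫ = ‖y‖^2 := real_inner_self_eq_norm_sq y
  have hwx : ⟪w, x⟫ = A := real_inner_comm x w
  have hwy : ⟪w, y⟫ = B := real_inner_comm y w
  have hxyB : ⟪x, y⟫ = ⟪x, y⟫ := rfl
  have hnw2 : (‖w‖:ℝ)^2 ≠ 0 := by positivity
  have hpx : ‖x'‖^2 = ‖x‖^2 - A^2 / ‖w‖^2 := by
    rw [← real_inner_self_eq_norm_sq, hx']
    simp only [inner_sub_left, inner_sub_right, real_inner_smul_left, real_inner_smul_right]
    rw [hww, hxx, hwx, ← hA]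
    field_simp [ha]
    rw [ha]
    field_simp
    ring
  have hpy : ‖y'‖^2 = ‖y‖^2 - B^2 / ‖w‖^2 := by
    rw [← real_inner_self_eq_norm_sq, hy']
    simp only [inner_sub_left, inner_sub_right, real_inner_smul_left, real_inner_smul_right]
    rw [hww, hyy, hwy, ← hB]
    field_simp [hb]
    rw [hb]
    field_simp
    ring
  set p := ‖x'‖ with hp
  set q := ‖y'‖ with hq
  have hsinα : (0:ℝ) ≤ Real.sin α :=
    Real.sin_nonneg_of_nonneg_of_le_pi hαnn hαpi
  have hsinβ : (0:ℝ) ≤ Real.sin β :=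
    Real.sin_nonneg_of_nonneg_of_le_pi hβnn hβpi
  have hpval : p = Real.sin α * ‖x‖ := by
    have h1 : p^2 = (Real.sin α * ‖x‖)^2 := by
      rw [hp, hpx, mul_pow, Real.sin_sq]
      have hc : Real.cos α = A / (‖x‖ * ‖w‖) := cos_angle x w
      rw [hc]
      field_simp
    calc p = Real.sqrt (p^2) := (Real.sqrt_sq (norm_nonneg _)).symm
      _ = Real.sqrt ((Real.sin α * ‖x‖)^2) := by rw [h1]
      _ = Real.sin α * ‖x‖ := Real.sqrt_sq (by positivity)
  have hqval : q = Real.sin β * ‖y‖ := by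
    have h1 : q^2 = (Real.sin β * ‖y‖)^2 := by
      rw [hq, hpy, mul_pow, Real.sin_sq]
      have hc : Real.cos β = B / (‖w‖ * ‖y‖) := by
        rw [hβ, cos_angle, hB, ← real_inner_comm w y]
      rw [hc]
      field_simp
    calc q = Real.sqrt (q^2) := (Real.sqrt_sq (norm_nonneg _)).symm
      _ = Real.sqrt ((Real.sin β * ‖y‖)^2) := by rw [h1]
      _ = Real.sin β * ‖y‖ := Real.sqrt_sq (by positivity)
  have hI : ⟪x', y'⟫ = ⟪x, y⟫ - A * B / ‖w‖^2 := by
    rw [hx', hy']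
    simp only [inner_sub_left, inner_sub_right, real_inner_smul_left, real_inner_smul_right]
    rw [hww, hwy, ← hA]
    field_simp [ha, hb]
    rw [ha, hb]
    field_simp
    ring
  have hCS : -(p * q) ≤ ⟪x', y'⟫ := by
    have h1 : ⟪-x', y'⟫ ≤ ‖-x'‖ * ‖y'‖ := real_inner_le_norm _ _
    rw [inner_neg_left, norm_neg] at h1
    linarith
  have hcos : Real.cos γ ≤ Real.cos (α + β) := by
    apply Real.cos_le_cos_of_nonneg_of_le_pi
    · exact add_nonneg hαnn hβnn
    · exact angle_le_pi x y
    · exact hcon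
  have hxyinner : ⟪x, y⟫ = Real.cos γ * (‖x‖ * ‖y‖) := (cos_angle_mul_norm_mul_norm x y).symm
  have hkey : ⟪x', y'⟫ = -(p * q) := by
    have h2 : Real.cos γ * (‖x‖ * ‖y‖) ≤ Real.cos (α + β) * (‖x‖ * ‖y‖) :=
      mul_le_mul_of_nonneg_right hcos (by positivity)
    rw [Real.cos_add] at h2
    have h3 : A * B / ‖w‖^2 = Real.cos α * Real.cos β * (‖x‖ * ‖y‖) := by
      rw [hAeq, hBeq]
      field_simp
    have h4 : ⟪x', y'⟫ ≤ -(p * q) := by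
      rw [hI, hxyinner, h3, hpval, hqval]
      have h5 : Real.sin α * ‖x‖ * (Real.sin β * ‖y‖) =
          Real.sin α * Real.sin β * (‖x‖ * ‖y‖) := by ring
      rw [h5]
      have h6 : (Real.cos α * Real.cos β - Real.sin α * Real.sin β) * (‖x‖ * ‖y‖)
          = Real.cos α * Real.cos β * (‖x‖ * ‖y‖)
            - Real.sin α * Real.sin β * (‖x‖ * ‖y‖) := by ring
      linarith only [h2, h6]
    exact le_antisymm h4 hCS
  have heq : q • (-x') = p • y' := by
    have h1 : ⟪-x', y'⟫ = ‖-x'‖ * ‖y'‖ := by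
      rw [inner_neg_left, norm_neg, hkey]
      ring
    have h2 := inner_eq_norm_mul_iff_real.mp h1
    rw [norm_neg] at h2
    exact h2
  rcases eq_or_lt_of_le (norm_nonneg x') with hp0 | hp0
  · have hx'0 : x' = 0 := norm_eq_zero.mp hp0.symm
    have hxa : x = a • w := sub_eq_zero.mp hx'0
    have ha0 : a ≠ 0 := by
      intro h0
      rw [h0, zero_smul] at hxa
      exact hx hxa
    have hwx' : w = a⁻¹ • x := by
      rw [hxa, smul_smul, inv_mul_cancel₀ ha0, one_smul]
    rcases lt_or_gt_of_ne ha0 with haneg | hapos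
    · have hαpi' : α = Real.pi := by
        rw [hα]
        exact angle_eq_pi_iff.mpr ⟨hx, a⁻¹, inv_lt_zero.mpr haneg, hwx'⟩
      rw [hαpi'] at hcon
      linarith
    · exact hcone ⟨a⁻¹, 0, le_of_lt (inv_pos.mpr hapos), le_refl 0, by
        rw [zero_smul, add_zero]; exact hwx'⟩
  rcases eq_or_lt_of_le (norm_nonneg y') with hq0 | hq0
  · have hy'0 : y' = 0 := norm_eq_zero.mp hq0.symm
    have hyb : y = b • w := sub_eq_zero.mp hy'0
    have hb0 : b ≠ 0 := by
      intro h0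
      rw [h0, zero_smul] at hyb
      exact hy hyb
    have hwy' : w = b⁻¹ • y := by
      rw [hyb, smul_smul, inv_mul_cancel₀ hb0, one_smul]
    rcases lt_or_gt_of_ne hb0 with hbneg | hbpos
    · have hβpi' : β = Real.pi := by
        rw [hβ]
        exact angle_eq_pi_iff.mpr ⟨hw, b, hbneg, hyb⟩
      rw [hβpi'] at hcon
      linarith
    · exact hcone ⟨0, b⁻¹, le_refl 0, le_of_lt (inv_pos.mpr hbpos), by
        rw [zero_smul, zero_add]; exact hwy'⟩
  -- main case: both projections nonzero
  have hcomb : q • x + p • y = (q * a + p * b) • w := by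
    have h1 : q • x' + p • y' = 0 := by
      have h2 : p • y' = -(q • x') := by
        rw [← heq, smul_neg]
      rw [h2, add_neg_cancel]
    rw [hx', hy'] at h1
    linear_combination (norm := module) h1
  set s := q * a + p * b with hs
  have hppos : 0 < p := hp0
  have hsinαpos : 0 < Real.sin α := by
    have h1 : 0 < Real.sin α * ‖x‖ := by rw [← hpval]; exact hppos
    rcases hsinα.lt_or_eq with h | h
    · exact h
    · rw [← h, zero_mul] at h1
      exact absurd h1 (lt_irrefl 0)
  have hαpos : 0 < α := by
    rcases hαnn.lt_or_eq with h | h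
    · exact h
    · exfalso
      have hα0 : α = 0 := h.symm
      rw [hα0, Real.sin_zero] at hsinαpos
      exact lt_irrefl 0 hsinαpos
  have hαβlt : α + β < Real.pi := lt_of_le_of_lt hcon hγpi
  have hsinab : 0 < Real.sin (α + β) :=
    Real.sin_pos_of_pos_of_lt_pi (by linarith) hαβlt
  have hsval : s = ‖x‖ * ‖y‖ * Real.sin (α + β) / ‖w‖ := by
    rw [hs, hpval, hqval, ha, hb, hAeq, hBeq, Real.sin_add]
    field_simp
    ring
  have hspos : 0 < s := by
    rw [hsval]
    positivity
  have hweq : w = (s⁻¹ * q) • x + (s⁻¹ * p) • y := by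
    have h1 : s⁻¹ • (s • w) = w := by
      rw [smul_smul, inv_mul_cancel₀ hspos.ne', one_smul]
    rw [← h1, ← hcomb, smul_add, smul_smul, smul_smul]
  exact hcone ⟨s⁻¹ * q, s⁻¹ * p,
    mul_nonneg (inv_nonneg.mpr hspos.le) (norm_nonneg _),
    mul_nonneg (inv_nonneg.mpr hspos.le) (norm_nonneg _), hweq⟩
end

section
/- Let P be an affine plane in ℝ³, let T ∈ ℝ³ with T ∉ P, and let u₁, …, u_K ∈ P (K ≥ 2) be user locations. For each k let g_k : ℝ → ℝ be strictly decreasing on [0, π], and for A ∈ P define G(A) = ∑_{k=1}^{K} g_k(∠(u_k − T, A − T)). Then every point A* ∈ P that maximizes G over P lies in the convex hull of {u₁, …, u_K} (Proposition 2: with more than two coplanar users, the optimal steering angle points to a location in the convex hull of the user locations). -/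
open InnerProductGeometry
open scoped RealInnerProductSpace

set_option maxHeartbeats 1000000 in
/-- Proposition 2: let `P` be an affine plane in ℝ³, `T ∉ P`, and `u₁, …, u_K ∈ P`
(`K ≥ 2`) user locations.  For strictly decreasing (on `[0,π]`) rate functions `g_k`,
the objective is `G(A) = ∑ₖ g_k(∠(u_k−T, A−T))`.  Every maximizer `A ∈ P` of `G`
over `P` lies in the convex hull of `{u₁, …, u_K}`. -/
theorem stmt_5 (P : AffineSubspace ℝ (EuclideanSpace ℝ (Fin 3)))
    (hP : Module.finrank ℝ P.direction = 2)
    (T : EuclideanSpace ℝ (Fin 3)) (hT : T ∉ P)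
    (K : ℕ) (hK : 2 ≤ K)
    (u : Fin K → EuclideanSpace ℝ (Fin 3)) (hu : ∀ k, u k ∈ P)
    (g : Fin K → ℝ → ℝ) (hg : ∀ k, StrictAntiOn (g k) (Set.Icc 0 Real.pi))
    (G : EuclideanSpace ℝ (Fin 3) → ℝ)
    (hG : ∀ A, G A = ∑ k, g k (angle (u k - T) (A - T)))
    (A : EuclideanSpace ℝ (Fin 3)) (hA : A ∈ P)
    (hmax : ∀ B ∈ P, G B ≤ G A) :
    A ∈ convexHull ℝ (Set.range u) := by
  by_contra hAhull
  have hNK : Nonempty (Fin K) := ⟨⟨0, by omega⟩⟩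
  -- strict separation
  have hclosed : IsClosed (convexHull ℝ (Set.range u)) :=
    ((Set.finite_range u).isCompact_convexHull (𝕜 := ℝ)).isClosed
  obtain ⟨f, c, hfA, hfu⟩ :=
    geometric_hahn_banach_point_closed (convex_convexHull ℝ _) hclosed hAhull
  set a : EuclideanSpace ℝ (Fin 3) := A - T with ha_def
  have ha_dir : a ∉ P.direction := by
    intro h
    have : (-a) +ᵥ A ∈ P := AffineSubspace.vadd_mem_of_mem_direction (neg_mem h) hA
    apply hT
    simpa [ha_def, vadd_eq_add, sub_eq_iff_eq_add] using this
  have ha0 : a ≠ 0 := fun h => ha_dir (h ▸ P.direction.zero_mem)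
  have haN : (0:ℝ) < ‖a‖ := norm_pos_iff.mpr ha0
  set m : EuclideanSpace ℝ (Fin 3) := a - (P.direction.orthogonalProjection a : _)
    with hm_def
  have hmo : m ∈ P.directionᗮ := P.direction.sub_starProjection_mem_orthogonal a
  have hm0 : m ≠ 0 := by
    intro h
    apply ha_dir
    have h2 : a = (P.direction.orthogonalProjection a : _) := sub_eq_zero.mp (hm_def ▸ h)
    rw [h2]; exact (P.direction.orthogonalProjection a).2
  have hm2 : (0:ℝ) < ‖m‖ ^ 2 := pow_pos (norm_pos_iff.mpr hm0) 2
  have hmo' := (Submodule.mem_orthogonal' _ _).mp hmo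
  have hma : ⟪m, a⟫ = ‖m‖ ^ 2 := by
    have h1 : ⟪m, (P.direction.orthogonalProjection a : _)⟫ = 0 :=
      hmo' _ (P.direction.orthogonalProjection a).2
    have h2 : a = m + (P.direction.orthogonalProjection a : _) := by
      rw [hm_def]; abel
    rw [h2, inner_add_right, h1, real_inner_self_eq_norm_sq]
    ring
  -- the orthogonal complement is spanned by m
  have hspan : P.directionᗮ = Submodule.span ℝ {m} := by
    have hle : Submodule.span ℝ {m} ≤ P.directionᗮ := by
      rw [Submodule.span_le, Set.singleton_subset_iff]; exact hmo
    have hfr1 : Module.finrank ℝ (Submodule.span ℝ {m}) = 1 :=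
      finrank_span_singleton hm0
    have hfr2 : Module.finrank ℝ P.directionᗮ = 1 := by
      have h3 := Submodule.finrank_add_finrank_orthogonal (K := P.direction)
      rw [hP, finrank_euclideanSpace_fin] at h3
      omega
    exact (Submodule.eq_of_le_of_finrank_eq hle (by rw [hfr1, hfr2])).symm
  have hmem_dir : ∀ x : EuclideanSpace ℝ (Fin 3), ⟪m, x⟫ = 0 → x ∈ P.direction := by
    intro x hx
    rw [← Submodule.orthogonal_orthogonal P.direction]
    intro y hy
    rw [hspan, Submodule.mem_span_singleton] at hy
    obtain ⟨r, rfl⟩ := hy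
    rw [real_inner_smul_left, hx, mul_zero]
  -- the perturbation vector ξ
  set η : EuclideanSpace ℝ (Fin 3) := (InnerProductSpace.toDual ℝ _).symm f with hη_def
  have hη : ∀ x, ⟪η, x⟫ = f x := fun x => InnerProductSpace.toDual_symm_apply
  set ξ : EuclideanSpace ℝ (Fin 3) := η - (⟪η, a⟫ / ‖m‖ ^ 2) • m with hξ_def
  have hξa : ⟪a, ξ⟫ = 0 := by
    rw [hξ_def, inner_sub_right, real_inner_smul_right, real_inner_comm m a, hma,
      real_inner_comm η a]
    field_simp
    ring
  have hmw : ∀ k, ⟪m, u k - T⟫ = ‖m‖ ^ 2 := by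
    intro k
    have hdir : u k - A ∈ P.direction := by
      have := AffineSubspace.vsub_mem_direction (hu k) hA
      simpa [vsub_eq_sub] using this
    have h0 : ⟪m, u k - A⟫ = 0 := hmo' _ hdir
    have h2 : u k - T = (u k - A) + a := by rw [ha_def]; abel
    rw [h2, inner_add_right, h0, hma, zero_add]
  have hwξ : ∀ k, 0 < ⟪u k - T, ξ⟫ := by
    intro k
    have h1 : ⟪u k - T, ξ⟫ = f (u k) - f A := by
      rw [hξ_def, inner_sub_right, real_inner_smul_right, real_inner_comm m (u k - T),
        hmw k, real_inner_comm η (u k - T), hη, hη, ha_def, map_sub, map_sub]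
      field_simp
      ring
    have h3 : f A < f (u k) := hfA.trans (hfu _ (subset_convexHull ℝ _ ⟨k, rfl⟩))
    rw [h1]
    exact sub_pos.mpr h3
  have hw0 : ∀ k, u k - T ≠ 0 := by
    intro k h
    apply hT
    have : u k = T := by rwa [sub_eq_zero] at h
    exact this ▸ hu k
  -- Pythagoras
  have hnorm : ∀ t : ℝ, ‖a + t • ξ‖ ^ 2 = ‖a‖ ^ 2 + t ^ 2 * ‖ξ‖ ^ 2 := by
    intro t
    rw [norm_add_sq_real, real_inner_smul_right, hξa, norm_smul]
    simp [mul_pow]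
  -- eventual conditions for small positive t
  have hev1 : ∀ᶠ t in nhdsWithin (0:ℝ) (Set.Ioi 0), 0 < ⟪m, a + t • ξ⟫ := by
    have hδ : (0:ℝ) < ‖m‖ ^ 2 / (|⟪m, ξ⟫| + 1) := by positivity
    filter_upwards [Ioo_mem_nhdsGT_of_mem ⟨le_refl (0:ℝ), hδ⟩] with t ht
    obtain ⟨ht0, htδ⟩ := ht
    rw [inner_add_right, real_inner_smul_right, hma]
    have h1 : t * (|⟪m, ξ⟫| + 1) < ‖m‖ ^ 2 := (lt_div_iff₀ (by positivity)).mp htδ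
    have h2 : t * (-|⟪m, ξ⟫|) ≤ t * ⟪m, ξ⟫ :=
      mul_le_mul_of_nonneg_left (neg_abs_le _) ht0.le
    nlinarith [abs_nonneg ⟪m, ξ⟫]
  have hev2 : ∀ k : Fin K, ∀ᶠ t in nhdsWithin (0:ℝ) (Set.Ioi 0),
      ⟪u k - T, a⟫ * ‖a + t • ξ‖ < ⟪u k - T, a + t • ξ⟫ * ‖a‖ := by
    intro k
    have hek := hwξ k
    have hinner : ∀ t : ℝ, ⟪u k - T, a + t • ξ⟫ = ⟪u k - T, a⟫ + t * ⟪u k - T, ξ⟫ := by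
      intro t; rw [inner_add_right, real_inner_smul_right]
    rcases le_or_gt (⟪u k - T, a⟫) 0 with hc | hc
    · filter_upwards [self_mem_nhdsWithin] with t ht
      have ht0 : (0:ℝ) < t := ht
      rw [hinner]
      have hge : ‖a‖ ≤ ‖a + t • ξ‖ := by
        refine le_of_pow_le_pow_left₀ two_ne_zero (norm_nonneg _) ?_
        rw [hnorm t]
        nlinarith [sq_nonneg (t * ‖ξ‖)]
      have h9 : ⟪u k - T, a⟫ * ‖a + t • ξ‖ ≤ ⟪u k - T, a⟫ * ‖a‖ :=
        mul_le_mul_of_nonpos_left hge hc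
      have h10 : 0 < t * ⟪u k - T, ξ⟫ * ‖a‖ := mul_pos (mul_pos ht0 hek) haN
      nlinarith [h9, h10]
    · have hden : (0:ℝ) < ⟪u k - T, a⟫ * ‖ξ‖ ^ 2 + 1 := by positivity
      have hδ : (0:ℝ) < 2 * ⟪u k - T, ξ⟫ * ‖a‖ ^ 2 / (⟪u k - T, a⟫ * ‖ξ‖ ^ 2 + 1) := by
        positivity
      filter_upwards [Ioo_mem_nhdsGT_of_mem ⟨le_refl (0:ℝ), hδ⟩] with t ht
      obtain ⟨ht0, htδ⟩ := ht
      have htδ' : t * (⟪u k - T, a⟫ * ‖ξ‖ ^ 2 + 1) < 2 * ⟪u k - T, ξ⟫ * ‖a‖ ^ 2 :=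
        (lt_div_iff₀ hden).mp htδ
      rw [hinner]
      have hRpos : 0 < (⟪u k - T, a⟫ + t * ⟪u k - T, ξ⟫) * ‖a‖ :=
        mul_pos (by nlinarith [mul_pos ht0 hek]) haN
      refine lt_of_pow_lt_pow_left₀ 2 hRpos.le ?_
      have h4 := hnorm t
      have h5 : (⟪u k - T, a⟫ * ‖a + t • ξ‖) ^ 2
          = ⟪u k - T, a⟫ ^ 2 * (‖a‖ ^ 2 + t ^ 2 * ‖ξ‖ ^ 2) := by
        rw [mul_pow, h4]
      rw [h5]
      nlinarith [mul_lt_mul_of_pos_right htδ' (mul_pos ht0 hc),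
        mul_pos (mul_pos ht0 ht0) hc, sq_nonneg (t * ⟪u k - T, ξ⟫ * ‖a‖)]
  obtain ⟨t, ht2, ht1, ht0⟩ :=
    ((Filter.eventually_all.mpr hev2).and (hev1.and self_mem_nhdsWithin)).exists
  have ht0 : (0:ℝ) < t := ht0
  set b : EuclideanSpace ℝ (Fin 3) := a + t • ξ with hb_def
  have hmb : 0 < ⟪m, b⟫ := ht1
  have hb0 : b ≠ 0 := by
    intro h
    rw [h, inner_zero_right] at hmb
    exact lt_irrefl 0 hmb
  have hbN : (0:ℝ) < ‖b‖ := norm_pos_iff.mpr hb0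
  set s : ℝ := ‖m‖ ^ 2 / ⟪m, b⟫ with hs_def
  have hs : 0 < s := div_pos hm2 hmb
  set B : EuclideanSpace ℝ (Fin 3) := s • b + T with hB_def
  have hBT : B - T = s • b := by rw [hB_def]; abel
  have hBP : B ∈ P := by
    have hBA : ⟪m, B - A⟫ = 0 := by
      have h6 : B - A = s • b - a := by rw [hB_def, ha_def]; abel
      rw [h6, inner_sub_right, real_inner_smul_right, hma, hs_def,
        div_mul_cancel₀ _ hmb.ne', sub_self]
    have h7 := AffineSubspace.vadd_mem_of_mem_direction (hmem_dir _ hBA) hA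
    have h8 : (B - A) +ᵥ A = B := by
      rw [vadd_eq_add]; abel
    rwa [h8] at h7
  -- every angle strictly decreases
  have hang : ∀ k, angle (u k - T) (B - T) < angle (u k - T) (A - T) := by
    intro k
    have hwN : (0:ℝ) < ‖u k - T‖ := norm_pos_iff.mpr (hw0 k)
    have hkey : ⟪u k - T, a⟫ * ‖b‖ < ⟪u k - T, b⟫ * ‖a‖ := ht2 k
    rw [hBT, angle_smul_right_of_pos _ _ hs]
    show angle (u k - T) b < angle (u k - T) (A - T)
    have hAa : A - T = a := ha_def.symm
    rw [hAa]
    unfold InnerProductGeometry.angle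
    refine Real.strictAntiOn_arccos
      (Set.mem_Icc.mpr (abs_le.mp (abs_real_inner_div_norm_mul_norm_le_one _ _)))
      (Set.mem_Icc.mpr (abs_le.mp (abs_real_inner_div_norm_mul_norm_le_one _ _))) ?_
    rw [div_lt_div_iff₀ (mul_pos hwN haN) (mul_pos hwN hbN)]
    nlinarith [mul_lt_mul_of_pos_left hkey hwN]
  -- contradiction with maximality
  have hlt : G A < G B := by
    rw [hG, hG]
    refine Finset.sum_lt_sum_of_nonempty Finset.univ_nonempty fun k _ => ?_
    exact hg k ⟨angle_nonneg _ _, angle_le_pi _ _⟩ ⟨angle_nonneg _ _, angle_le_pi _ _⟩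
      (hang k)
  exact absurd (hmax B hBP) (not_le.mpr hlt)
end

section
/- Let P be an affine plane in ℝ³, let T ∈ ℝ³ with T ∉ P, let u₁, …, u_K ∈ P, let C be the convex hull of {u₁, …, u_K}, let each g_k : ℝ → ℝ be strictly decreasing on [0, π], and let G(A) = ∑_{k=1}^{K} g_k(∠(u_k − T, A − T)) for A ∈ P. Then sup_{A ∈ P} G(A) = sup_{A ∈ C} G(A); that is, restricting the search for the optimal steering aim point from the whole plane to the convex hull of the user locations does not change the optimal value (correctness of the decreased search space). -/
open InnerProductGeometry RealInnerProductSpace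

/-- First-order condition: if `x` minimizes `‖·-c‖²` along the segment to `y`, then
the inner product of `x - c` with `y - x` is nonnegative. -/
private lemma fo_aux {E : Type*} [NormedAddCommGroup E] [InnerProductSpace ℝ E]
    {x y c : E}
    (h : ∀ t : ℝ, 0 ≤ t → t ≤ 1 → ‖x - c‖ ^ 2 ≤ ‖x + t • (y - x) - c‖ ^ 2) :
    0 ≤ ⟪x - c, y - x⟫ := by
  by_contra hneg
  push_neg at hneg
  have key : ∀ t : ℝ, 0 ≤ t → t ≤ 1 →
      0 ≤ 2 * (t * ⟪x - c, y - x⟫) + (t * ‖y - x‖) ^ 2 := by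
    intro t ht0 ht1
    have hrw : x + t • (y - x) - c = (x - c) + t • (y - x) := by abel
    have hexp : ‖x + t • (y - x) - c‖ ^ 2
        = ‖x - c‖ ^ 2 + 2 * (t * ⟪x - c, y - x⟫) + (|t| * ‖y - x‖) ^ 2 := by
      rw [hrw, norm_add_sq_real, real_inner_smul_right, norm_smul, Real.norm_eq_abs]
    have h2 := h t ht0 ht1
    rw [hexp, abs_of_nonneg ht0] at h2
    linarith
  have hd : (0:ℝ) ≤ ‖y - x‖ ^ 2 := by positivity
  rcases eq_or_lt_of_le hd with hd0 | hd0
  · have := key 1 zero_le_one le_rfl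
    nlinarith
  · set d := ‖y - x‖ ^ 2 with hddef
    set W := ⟪x - c, y - x⟫ with hWdef
    set t : ℝ := min 1 (-W / d) with htdef
    have ht0 : 0 < t := lt_min one_pos (div_pos (neg_pos.2 hneg) hd0)
    have ht1 : t ≤ 1 := min_le_left _ _
    have htd : t * d ≤ -W := by
      have h3 : t ≤ -W / d := min_le_right _ _
      calc t * d ≤ (-W / d) * d := by nlinarith
        _ = -W := by field_simp
    have hkey := key t ht0.le ht1
    have hsq : (t * ‖y - x‖) ^ 2 = t * (t * d) := by
      rw [hddef]; ring
    nlinarith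

private lemma cone_feas {E : Type*} [NormedAddCommGroup E] [InnerProductSpace ℝ E]
    {K : ℕ} (hK : 0 < K) (w : Fin K → E)
    {b : E} (hb : ‖b‖ = 1) {n : E} (hn : ∀ k, 0 < ⟪w k, n⟫) :
    ∃ c : Fin K → ℝ, (∀ k, 0 ≤ c k) ∧ ‖∑ k, c k • w k‖ = 1 ∧
      ∀ j, ⟪w j, b⟫ ≤ ⟪w j, ∑ k, c k • w k⟫ := by
  haveI : Nonempty (Fin K) := ⟨⟨0, hK⟩⟩
  set β : ℝ := Finset.univ.inf' Finset.univ_nonempty (fun k => ⟪w k, n⟫) with hβdef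
  have hβ : 0 < β := by
    rw [hβdef, Finset.lt_inf'_iff]
    exact fun k _ => hn k
  have hβle : ∀ k, β ≤ ⟪w k, n⟫ := fun k => Finset.inf'_le _ (Finset.mem_univ k)
  have hsum_n : ∀ lam : Fin K → ℝ, (∀ k, 0 ≤ lam k) →
      β * (∑ k, lam k) ≤ ⟪∑ k, lam k • w k, n⟫ := by
    intro lam hlam
    rw [sum_inner, Finset.mul_sum]
    refine Finset.sum_le_sum fun k _ => ?_
    rw [real_inner_smul_left, mul_comm β (lam k)]
    exact mul_le_mul_of_nonneg_left (hβle k) (hlam k)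
  -- continuity helpers
  have hcontF : Continuous fun lam : Fin K → ℝ => (∑ k, lam k • w k : E) :=
    continuous_finset_sum _ fun k _ => (continuous_apply k).smul continuous_const
  -- Step 1: z from minimizing ‖∑ λ w‖² over the simplex
  obtain ⟨lam1, hlam1S, hmin1⟩ :=
    (isCompact_stdSimplex ℝ (Fin K)).exists_isMinOn
      ⟨Pi.single ⟨0, hK⟩ 1, single_mem_stdSimplex ℝ _⟩
      (((hcontF.norm).pow 2).continuousOn)
  set z := ∑ k, lam1 k • w k with hzdef
  have hz_inner : ∀ j, ‖z‖ ^ 2 ≤ ⟪w j, z⟫ := by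
    intro j
    have hfo := fo_aux (x := z) (y := w j) (c := 0) ?_
    · rw [sub_zero, inner_sub_right, real_inner_self_eq_norm_sq] at hfo
      rw [real_inner_comm]
      linarith
    · intro t ht0 ht1
      have hmem : ((1 - t) • lam1 + t • (Pi.single j 1 : Fin K → ℝ)) ∈ stdSimplex ℝ (Fin K) :=
        (convex_stdSimplex ℝ _) hlam1S (single_mem_stdSimplex ℝ j)
          (by linarith) ht0 (by ring)
      have hval := hmin1 hmem
      have hrepr : ∑ k, (((1 - t) • lam1 + t • (Pi.single j 1 : Fin K → ℝ)) k) • w k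
          = z + t • (w j - z) := by
        have h1 : ∀ k, (((1 - t) • lam1 + t • (Pi.single j 1 : Fin K → ℝ)) k) • w k
            = (1 - t) • (lam1 k • w k) + t • ((Pi.single j 1 : Fin K → ℝ) k • w k) := by
          intro k
          simp [Pi.add_apply, Pi.smul_apply, add_smul, smul_smul]
        rw [Finset.sum_congr rfl fun k _ => h1 k, Finset.sum_add_distrib,
          ← Finset.smul_sum, ← Finset.smul_sum]
        have h2 : ∑ k, (Pi.single j 1 : Fin K → ℝ) k • w k = w j := by
          rw [Finset.sum_eq_single j]
          · simp
          · intro k _ hkj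
            simp [Pi.single_apply, hkj]
          · intro h; exact absurd (Finset.mem_univ j) h
        rw [h2, ← hzdef]
        rw [smul_sub, sub_smul, one_smul]
        abel
      simp only [Set.mem_setOf_eq] at hval
      calc ‖z - 0‖ ^ 2 = ‖∑ k, lam1 k • w k‖ ^ 2 := by rw [sub_zero, hzdef]
        _ ≤ ‖∑ k, (((1 - t) • lam1 + t • (Pi.single j 1 : Fin K → ℝ)) k) • w k‖ ^ 2 := by
            simpa using hmin1 hmem
        _ = ‖z + t • (w j - z) - 0‖ ^ 2 := by rw [hrepr, sub_zero]
  have hz_n : β ≤ ⟪z, n⟫ := by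
    have := hsum_n lam1 hlam1S.1
    rwa [hlam1S.2, mul_one] at this
  have hz_ne : z ≠ 0 := by
    intro h
    rw [h, inner_zero_left] at hz_n
    linarith
  have hz_pos : 0 < ‖z‖ := norm_pos_iff.2 hz_ne
  -- Step 2: q from minimizing ‖∑ λ w - b‖² over a box
  set R : ℝ := 2 * ‖n‖ / β + 1 with hRdef
  have hRnn : 0 ≤ 2 * ‖n‖ / β := by positivity
  have hbox_ne : (Set.Icc (0 : Fin K → ℝ) (fun _ => R)).Nonempty :=
    ⟨0, Set.mem_Icc.2 ⟨le_rfl, fun k => by simp [hRdef]; positivity⟩⟩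
  obtain ⟨lam2, hlam2B, hmin2⟩ :=
    (isCompact_Icc (a := (0 : Fin K → ℝ)) (b := fun _ => R)).exists_isMinOn hbox_ne
      ((((hcontF.sub continuous_const).norm).pow 2).continuousOn)
  set q := ∑ k, lam2 k • w k with hqdef
  have hlam2nn : ∀ k, 0 ≤ lam2 k := fun k => (Set.mem_Icc.1 hlam2B).1 k
  have hqb : ‖q - b‖ ^ 2 ≤ 1 := by
    have h0mem : (0 : Fin K → ℝ) ∈ Set.Icc (0 : Fin K → ℝ) (fun _ => R) :=
      Set.mem_Icc.2 ⟨le_rfl, fun k => by simp [hRdef]; positivity⟩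
    have := hmin2 h0mem
    simp only [Set.mem_setOf_eq] at this
    calc ‖q - b‖ ^ 2 ≤ ‖∑ k, (0:ℝ) • w k - b‖ ^ 2 := by simpa [hqdef] using this
      _ = 1 := by simp [hb]
  have hqble : ‖q - b‖ ≤ 1 := by nlinarith [norm_nonneg (q - b)]
  have hqnorm2 : ‖q‖ ≤ 2 := by
    calc ‖q‖ = ‖q - b + b‖ := by rw [sub_add_cancel]
      _ ≤ ‖q - b‖ + ‖b‖ := norm_add_le _ _
      _ ≤ 2 := by rw [hb]; linarith
  have hcoord : ∀ j, lam2 j ≤ R - 1 := by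
    intro j
    have h1 : β * (∑ k, lam2 k) ≤ ⟪q, n⟫ := hsum_n lam2 hlam2nn
    have h2 : ⟪q, n⟫ ≤ ‖q‖ * ‖n‖ := real_inner_le_norm _ _
    have h3 : ∑ k, lam2 k ≤ 2 * ‖n‖ / β := by
      rw [le_div_iff₀ hβ]
      nlinarith [norm_nonneg n]
    have h4 : lam2 j ≤ ∑ k, lam2 k :=
      Finset.single_le_sum (fun k _ => hlam2nn k) (Finset.mem_univ j)
    simp only [hRdef]
    linarith
  have hq_inner : ∀ j, ⟪w j, b⟫ ≤ ⟪w j, q⟫ := by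
    intro j
    have hfo := fo_aux (x := q) (y := q + w j) (c := b) ?_
    · rw [add_sub_cancel_left, inner_sub_left] at hfo
      have h1 : ⟪b, w j⟫ = ⟪w j, b⟫ := real_inner_comm _ _
      have h2 : ⟪q, w j⟫ = ⟪w j, q⟫ := real_inner_comm _ _
      linarith
    · intro t ht0 ht1
      have hmem : (lam2 + t • (Pi.single j 1 : Fin K → ℝ))
          ∈ Set.Icc (0 : Fin K → ℝ) (fun _ => R) := by
        refine Set.mem_Icc.2 ⟨fun k => ?_, fun k => ?_⟩
        · have : (0:ℝ) ≤ t * (Pi.single j 1 : Fin K → ℝ) k := by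
            apply mul_nonneg ht0
            rcases eq_or_ne k j with h | h <;> simp [Pi.single_apply, h]
          simpa using add_nonneg (hlam2nn k) this
        · have hsle : (Pi.single j 1 : Fin K → ℝ) k ≤ 1 := by
            rcases eq_or_ne k j with h | h <;> simp [Pi.single_apply, h]
          have : t * (Pi.single j 1 : Fin K → ℝ) k ≤ 1 := by
            have hnn : (0:ℝ) ≤ (Pi.single j 1 : Fin K → ℝ) k := by
              rcases eq_or_ne k j with h | h <;> simp [Pi.single_apply, h]
            nlinarith
          have := hcoord k
          simpa using by linarith [this]
      have hval := hmin2 hmem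
      simp only [Set.mem_setOf_eq] at hval
      have hrepr : ∑ k, ((lam2 + t • (Pi.single j 1 : Fin K → ℝ)) k) • w k
          = q + t • ((q + w j) - q) := by
        have h1 : ∀ k, ((lam2 + t • (Pi.single j 1 : Fin K → ℝ)) k) • w k
            = lam2 k • w k + t • ((Pi.single j 1 : Fin K → ℝ) k • w k) := by
          intro k
          simp [add_smul, smul_smul]
        rw [Finset.sum_congr rfl fun k _ => h1 k, Finset.sum_add_distrib, ← Finset.smul_sum]
        have h2 : ∑ k, (Pi.single j 1 : Fin K → ℝ) k • w k = w j := by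
          rw [Finset.sum_eq_single j]
          · simp
          · intro k _ hkj
            simp [Pi.single_apply, hkj]
          · intro h; exact absurd (Finset.mem_univ j) h
        rw [h2, ← hqdef, add_sub_cancel_left]
      calc ‖q - b‖ ^ 2 = ‖∑ k, lam2 k • w k - b‖ ^ 2 := by rw [hqdef]
        _ ≤ ‖∑ k, ((lam2 + t • (Pi.single j 1 : Fin K → ℝ)) k) • w k - b‖ ^ 2 := by
            simpa using hval
        _ = ‖q + t • ((q + w j) - q) - b‖ ^ 2 := by rw [hrepr]
  have hq_le1 : ‖q‖ ≤ 1 := by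
    have hfo := fo_aux (x := q) (y := 0) (c := b) ?_
    · rw [zero_sub, inner_neg_right, inner_sub_left, real_inner_self_eq_norm_sq] at hfo
      have h5 : ‖q‖ ^ 2 ≤ ⟪b, q⟫ := by linarith
      have h6 : ⟪b, q⟫ ≤ ‖b‖ * ‖q‖ := real_inner_le_norm _ _
      rw [hb, one_mul] at h6
      nlinarith [norm_nonneg q]
    · intro t ht0 ht1
      have hmem : ((1 - t) • lam2) ∈ Set.Icc (0 : Fin K → ℝ) (fun _ => R) := by
        refine Set.mem_Icc.2 ⟨fun k => ?_, fun k => ?_⟩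
        · simpa using mul_nonneg (by linarith) (hlam2nn k)
        · have h7 : (1 - t) * lam2 k ≤ lam2 k := by nlinarith [hlam2nn k]
          have h8 := hcoord k
          simpa using by linarith
      have hval := hmin2 hmem
      simp only [Set.mem_setOf_eq] at hval
      have hrepr : ∑ k, (((1 - t) • lam2) k) • w k = q + t • (0 - q) := by
        have h1 : ∀ k, (((1 - t) • lam2) k) • w k = (1 - t) • (lam2 k • w k) := by
          intro k; simp [smul_smul]
        rw [Finset.sum_congr rfl fun k _ => h1 k, ← Finset.smul_sum, ← hqdef]
        rw [zero_sub, smul_neg, sub_smul, one_smul]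
        abel
      calc ‖q - b‖ ^ 2 = ‖∑ k, lam2 k • w k - b‖ ^ 2 := by rw [hqdef]
        _ ≤ ‖∑ k, (((1 - t) • lam2) k) • w k - b‖ ^ 2 := by simpa using hval
        _ = ‖q + t • (0 - q) - b‖ ^ 2 := by rw [hrepr]
  -- Step 3: intermediate value theorem along the ray q + t • z
  set φ : ℝ → ℝ := fun t => ‖q + t • z‖ with hφdef
  have hφcont : Continuous φ :=
    (continuous_const.add (continuous_id.smul continuous_const)).norm
  set t1 : ℝ := (2 + ‖q‖) / ‖z‖ with ht1def
  have ht1nn : 0 ≤ t1 := by positivity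
  have hφt1 : 2 ≤ φ t1 := by
    have h1 : ‖t1 • z‖ = 2 + ‖q‖ := by
      rw [norm_smul, Real.norm_eq_abs, abs_of_nonneg ht1nn, ht1def,
        div_mul_cancel₀ _ (ne_of_gt hz_pos)]
    have h2 : ‖t1 • z‖ ≤ ‖q + t1 • z‖ + ‖q‖ := by
      calc ‖t1 • z‖ = ‖(q + t1 • z) - q‖ := by rw [add_sub_cancel_left]
        _ ≤ ‖q + t1 • z‖ + ‖q‖ := norm_sub_le _ _
    rw [h1] at h2
    simp only [hφdef]
    linarith
  have hφ0 : φ 0 ≤ 1 := by simpa [hφdef] using hq_le1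
  have h1mem : (1:ℝ) ∈ Set.Icc (φ 0) (φ t1) := ⟨hφ0.trans (by norm_num), by linarith⟩
  obtain ⟨ts, htsmem, htsval⟩ := intermediate_value_Icc ht1nn hφcont.continuousOn h1mem
  have hts0 : 0 ≤ ts := htsmem.1
  -- assemble
  refine ⟨fun k => lam2 k + ts * lam1 k, fun k => add_nonneg (hlam2nn k)
    (mul_nonneg hts0 (hlam1S.1 k)), ?_, ?_⟩
  · have hrepr : ∑ k, (lam2 k + ts * lam1 k) • w k = q + ts • z := by
      rw [hqdef, hzdef, Finset.smul_sum, ← Finset.sum_add_distrib]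
      refine Finset.sum_congr rfl fun k _ => ?_
      rw [add_smul, smul_smul]
    rw [hrepr]
    exact htsval
  · intro j
    have hrepr : ∑ k, (lam2 k + ts * lam1 k) • w k = q + ts • z := by
      rw [hqdef, hzdef, Finset.smul_sum, ← Finset.sum_add_distrib]
      refine Finset.sum_congr rfl fun k _ => ?_
      rw [add_smul, smul_smul]
    rw [hrepr, inner_add_right, real_inner_smul_right]
    have h9 : 0 ≤ ⟪w j, z⟫ := le_trans (by positivity) (hz_inner j)
    have h10 := hq_inner j
    linarith [mul_nonneg hts0 h9]

private lemma dominate (P : AffineSubspace ℝ (EuclideanSpace ℝ (Fin 3)))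
    (T : EuclideanSpace ℝ (Fin 3)) (hT : T ∉ P)
    {K : ℕ} (hK : 0 < K)
    (u : Fin K → EuclideanSpace ℝ (Fin 3)) (hu : ∀ k, u k ∈ P)
    {A : EuclideanSpace ℝ (Fin 3)} (hA : A ∈ P) :
    ∃ A' ∈ convexHull ℝ (Set.range u),
      ∀ k, angle (u k - T) (A' - T) ≤ angle (u k - T) (A - T) := by
  classical
  set v : Fin K → EuclideanSpace ℝ (Fin 3) := fun k => u k - T with hvdef
  have hvne : ∀ k, v k ≠ 0 := by
    intro k h
    have : u k = T := by rwa [hvdef, sub_eq_zero] at h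
    exact hT (this ▸ hu k)
  have hvpos : ∀ k, 0 < ‖v k‖ := fun k => norm_pos_iff.2 (hvne k)
  set a : EuclideanSpace ℝ (Fin 3) := A - T with hadef
  have hane : a ≠ 0 := by
    intro h
    have : A = T := by rwa [hadef, sub_eq_zero] at h
    exact hT (this ▸ hA)
  have hapos : 0 < ‖a‖ := norm_pos_iff.2 hane
  set w : Fin K → EuclideanSpace ℝ (Fin 3) := fun k => ‖v k‖⁻¹ • v k with hwdef
  set b : EuclideanSpace ℝ (Fin 3) := ‖a‖⁻¹ • a with hbdef
  have hb1 : ‖b‖ = 1 := norm_smul_inv_norm hane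
  -- the normal direction
  set n : EuclideanSpace ℝ (Fin 3) :=
    a - (Submodule.orthogonalProjectionOnto P.direction a : EuclideanSpace ℝ (Fin 3)) with hndef
  have hnmem : n ∈ P.directionᗮ := Submodule.sub_starProjection_mem_orthogonal a
  have hn0 : n ≠ 0 := by
    intro h
    have haP : a ∈ P.direction := by
      have h2 : a = (Submodule.orthogonalProjectionOnto P.direction a : EuclideanSpace ℝ (Fin 3)) := by
        rwa [hndef, sub_eq_zero] at h
      rw [h2]
      exact (Submodule.orthogonalProjectionOnto P.direction a).2
    have hTP : T ∈ P := by
      have h3 := AffineSubspace.vadd_mem_of_mem_direction (P.direction.neg_mem haP) hA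
      have h4 : (-a) +ᵥ A = T := by
        simp [hadef, vadd_eq_add]
      rwa [h4] at h3
    exact hT hTP
  have hinner_an : ⟪a, n⟫ = ‖n‖ ^ 2 := by
    have hdecomp : a = n + (Submodule.orthogonalProjectionOnto P.direction a : EuclideanSpace ℝ (Fin 3)) := by
      rw [hndef]; exact (sub_add_cancel _ _).symm
    have hproj0 : ⟪(Submodule.orthogonalProjectionOnto P.direction a : EuclideanSpace ℝ (Fin 3)), n⟫ = 0 :=
      hnmem _ (Submodule.orthogonalProjectionOnto P.direction a).2
    calc ⟪a, n⟫ = ⟪n + (Submodule.orthogonalProjectionOnto P.direction a : EuclideanSpace ℝ (Fin 3)), n⟫ := by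
          rw [← hdecomp]
      _ = ⟪n, n⟫ + ⟪(Submodule.orthogonalProjectionOnto P.direction a : EuclideanSpace ℝ (Fin 3)), n⟫ :=
          inner_add_left _ _ _
      _ = ‖n‖ ^ 2 := by rw [hproj0, real_inner_self_eq_norm_sq, add_zero]
  have hinner_vn : ∀ k, ⟪v k, n⟫ = ‖n‖ ^ 2 := by
    intro k
    have hmem : v k - a ∈ P.direction := by
      have h5 : v k - a = u k - A := by rw [hvdef, hadef]; exact sub_sub_sub_cancel_right _ _ _
      rw [h5]
      have h6 := AffineSubspace.vsub_mem_direction (hu k) hA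
      rwa [vsub_eq_sub] at h6
    have h7 : ⟪v k - a, n⟫ = 0 := hnmem _ hmem
    rw [inner_sub_left] at h7
    linarith [hinner_an]
  have hwn : ∀ k, 0 < ⟪w k, n⟫ := by
    intro k
    rw [hwdef]
    simp only []
    rw [real_inner_smul_left, hinner_vn]
    exact mul_pos (inv_pos.2 (hvpos k)) (pow_pos (norm_pos_iff.2 hn0) 2)
  obtain ⟨c, hc0, hcnorm, hcineq⟩ := cone_feas hK w hb1 hwn
  set x : EuclideanSpace ℝ (Fin 3) := ∑ k, c k • w k with hxdef
  set e : Fin K → ℝ := fun k => c k * ‖v k‖⁻¹ with hedef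
  have he0 : ∀ k, 0 ≤ e k := fun k => mul_nonneg (hc0 k) (by positivity)
  have hxe : x = ∑ k, e k • v k := by
    rw [hxdef]
    refine Finset.sum_congr rfl fun k _ => ?_
    rw [hwdef, hedef]
    simp only []
    rw [smul_smul]
  have hxne : x ≠ 0 := by
    intro h
    rw [h, norm_zero] at hcnorm
    norm_num at hcnorm
  have hS : 0 < ∑ k, e k := by
    rcases (Finset.sum_nonneg fun k _ => he0 k).lt_or_eq with h | h
    · exact h
    · exfalso
      apply hxne
      rw [hxe]
      refine Finset.sum_eq_zero fun k _ => ?_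
      have hek : e k = 0 := by
        have := (Finset.sum_eq_zero_iff_of_nonneg fun k _ => he0 k).1 h.symm k (Finset.mem_univ k)
        exact this
      rw [hek, zero_smul]
  set A' : EuclideanSpace ℝ (Fin 3) := Finset.univ.centerMass e u with hA'def
  have hA'mem : A' ∈ convexHull ℝ (Set.range u) :=
    Finset.centerMass_mem_convexHull _ (fun k _ => he0 k) hS (fun k _ => Set.mem_range_self k)
  refine ⟨A', hA'mem, fun k => ?_⟩
  have hA'T : A' - T = (∑ k, e k)⁻¹ • x := by
    have hsum : ∑ k, e k • v k = (∑ k, e k • u k) - (∑ k, e k) • T := by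
      rw [Finset.sum_smul, ← Finset.sum_sub_distrib]
      refine Finset.sum_congr rfl fun k _ => ?_
      rw [hvdef]
      simp only []
      rw [smul_sub]
    rw [hA'def, Finset.centerMass, hxe, hsum, smul_sub, smul_smul,
      inv_mul_cancel₀ (ne_of_gt hS), one_smul]
  have hgoal : angle (v k) ((∑ k, e k)⁻¹ • x) ≤ angle (v k) a := by
    rw [angle_smul_right_of_pos _ _ (inv_pos.2 hS)]
    have hkey : ⟪v k, a⟫ / (‖v k‖ * ‖a‖) ≤ ⟪v k, x⟫ / (‖v k‖ * ‖x‖) := by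
      have h1 : ⟪w k, b⟫ = ⟪v k, a⟫ / (‖v k‖ * ‖a‖) := by
        rw [hwdef, hbdef]
        simp only []
        rw [real_inner_smul_left, real_inner_smul_right]
        field_simp
      have h2 : ⟪w k, x⟫ = ⟪v k, x⟫ / (‖v k‖ * ‖x‖) := by
        rw [hwdef]
        simp only []
        rw [real_inner_smul_left, hcnorm, mul_one]
        field_simp
      rw [← h1, ← h2]
      exact hcineq k
    have hmem1 : ⟪v k, a⟫ / (‖v k‖ * ‖a‖) ∈ Set.Icc (-1:ℝ) 1 :=
      abs_le.1 (abs_real_inner_div_norm_mul_norm_le_one (v k) a)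
    have hmem2 : ⟪v k, x⟫ / (‖v k‖ * ‖x‖) ∈ Set.Icc (-1:ℝ) 1 :=
      abs_le.1 (abs_real_inner_div_norm_mul_norm_le_one (v k) x)
    have harccos := Real.strictAntiOn_arccos.antitoneOn hmem1 hmem2 hkey
    unfold InnerProductGeometry.angle
    exact harccos
  rw [hA'T]
  exact hgoal

/-- Correctness of the decreased search space: let `P` be an affine plane in ℝ³,
`T ∉ P`, `u₁, …, u_K ∈ P` user locations with convex hull `C`, `g_k` strictly
decreasing on `[0,π]`, and `G(A) = ∑ₖ g_k(∠(u_k−T, A−T))`.  Then the supremum of `G`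
over the whole plane `P` equals its supremum over `C`. -/
theorem stmt_7 (P : AffineSubspace ℝ (EuclideanSpace ℝ (Fin 3)))
    (hP : Module.finrank ℝ P.direction = 2)
    (T : EuclideanSpace ℝ (Fin 3)) (hT : T ∉ P)
    (K : ℕ) (hK : 0 < K)
    (u : Fin K → EuclideanSpace ℝ (Fin 3)) (hu : ∀ k, u k ∈ P)
    (C : Set (EuclideanSpace ℝ (Fin 3))) (hC : C = convexHull ℝ (Set.range u))
    (g : Fin K → ℝ → ℝ) (hg : ∀ k, StrictAntiOn (g k) (Set.Icc 0 Real.pi))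
    (G : EuclideanSpace ℝ (Fin 3) → ℝ)
    (hG : ∀ A, G A = ∑ k, g k (angle (u k - T) (A - T))) :
    sSup (G '' (P : Set (EuclideanSpace ℝ (Fin 3)))) = sSup (G '' C) := by
  have hCP : C ⊆ (P : Set (EuclideanSpace ℝ (Fin 3))) := by
    rw [hC]
    refine convexHull_min ?_ P.convex
    rintro _ ⟨k, rfl⟩
    exact hu k
  have hmemangle : ∀ (k : Fin K) (B : EuclideanSpace ℝ (Fin 3)),
      angle (u k - T) (B - T) ∈ Set.Icc (0:ℝ) Real.pi :=
    fun k B => ⟨angle_nonneg _ _, angle_le_pi _ _⟩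
  have hbdd : ∀ B, G B ≤ ∑ k, g k 0 := by
    intro B
    rw [hG]
    refine Finset.sum_le_sum fun k _ => ?_
    exact (hg k).antitoneOn ⟨le_rfl, Real.pi_pos.le⟩ (hmemangle k B) (angle_nonneg _ _)
  have hbP : BddAbove (G '' (P : Set (EuclideanSpace ℝ (Fin 3)))) := by
    refine ⟨∑ k, g k 0, ?_⟩
    rintro _ ⟨B, _, rfl⟩
    exact hbdd B
  have hbC : BddAbove (G '' C) := by
    refine ⟨∑ k, g k 0, ?_⟩
    rintro _ ⟨B, _, rfl⟩
    exact hbdd B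
  have hCne : C.Nonempty := by
    refine ⟨u ⟨0, hK⟩, ?_⟩
    rw [hC]
    exact subset_convexHull ℝ _ (Set.mem_range_self _)
  have hPne : (P : Set (EuclideanSpace ℝ (Fin 3))).Nonempty := ⟨u ⟨0, hK⟩, hu _⟩
  apply le_antisymm
  · refine csSup_le (hPne.image G) ?_
    rintro _ ⟨A, hA, rfl⟩
    obtain ⟨A', hA'C, hdom⟩ := dominate P T hT hK u hu hA
    have hGA : G A ≤ G A' := by
      rw [hG, hG]
      refine Finset.sum_le_sum fun k _ => ?_
      exact (hg k).antitoneOn (hmemangle k A') (hmemangle k A) (hdom k)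
    refine hGA.trans (le_csSup hbC ?_)
    exact ⟨A', hC ▸ hA'C, rfl⟩
  · exact csSup_le_csSup hbP (hCne.image G) (fun _ ⟨x, hx, h⟩ => ⟨x, hCP hx, h⟩)
end
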